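/- Consider the Hoeffding test that accepts H₀ on measurement sequences of length t iff Δ₀ of the joint empirical type is less than α > 0. Then the worst-case type-I error probability satisfies μ_t ≤ (t+1)^{|X|^K} · 2^{−tα}, and the worst-case type-II error probability satisfies λ_t ≤ (t+1)^{|X|^K} · 2^{−t β^*(α)}, where μ_t = max_{p₀: d(p₀)≤d₀} p₀(R_t^c) and λ_t = max_{p₁: d(p₁)≥d₁} p₁(R_t) with R_t the acceptance region. -/

import Mathlib

open Finset

/-- The probability simplex over a finite alphabet `Z`. -/
def simplex (Z : Type*) [Fintype Z] : Set (Z → ℝ) :=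
  {p | (∀ z, 0 ≤ p z) ∧ ∑ z, p z = 1}

/-- KL divergence (in bits) between two distributions on a finite alphabet,
with value `∞` when absolute continuity fails. -/
noncomputable def KLdiv {Z : Type*} [Fintype Z] (p q : Z → ℝ) : ENNReal :=
  if ∀ z, q z = 0 → p z = 0 then
    ENNReal.ofReal (∑ z, p z * Real.logb 2 (p z / q z))
  else ⊤

/-- `Δ₀(p) = inf {D(p‖p₀) : d(p₀) ≤ d₀}` (infimum over the empty set is `∞`). -/
noncomputable def Delta0 {Z : Type*} [Fintype Z]
    (d : (Z → ℝ) → ℝ) (d0 : ℝ) (p : Z → ℝ) : ENNReal :=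
  sInf {v | ∃ q ∈ simplex Z, d q ≤ d0 ∧ v = KLdiv p q}

/-- `Δ₁(p) = inf {D(p‖p₁) : d(p₁) ≥ d₁}` (infimum over the empty set is `∞`). -/
noncomputable def Delta1 {Z : Type*} [Fintype Z]
    (d : (Z → ℝ) → ℝ) (d1 : ℝ) (p : Z → ℝ) : ENNReal :=
  sInf {v | ∃ q ∈ simplex Z, d1 ≤ d q ∧ v = KLdiv p q}

/-- `α_*(γ) = inf {Δ₀(p) : p ∈ simplex, d(p) ≥ γ}`. -/
noncomputable def alphaStar {Z : Type*} [Fintype Z]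
    (d : (Z → ℝ) → ℝ) (d0 γ : ℝ) : ENNReal :=
  sInf {v | ∃ p ∈ simplex Z, γ ≤ d p ∧ v = Delta0 d d0 p}

/-- `γ_*(α) = inf {γ ≥ 0 : α_*(γ) ≥ α}`. -/
noncomputable def gammaStar {Z : Type*} [Fintype Z]
    (d : (Z → ℝ) → ℝ) (d0 : ℝ) (α : ENNReal) : ℝ :=
  sInf {γ | 0 ≤ γ ∧ α ≤ alphaStar (Z := Z) d d0 γ}

/-- `β_*(α) = inf {Δ₁(p) : d(p) < γ_*(α)}`. -/
noncomputable def betaStarLow {Z : Type*} [Fintype Z]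
    (d : (Z → ℝ) → ℝ) (d0 d1 : ℝ) (α : ENNReal) : ENNReal :=
  sInf {v | ∃ p ∈ simplex Z, d p < gammaStar d d0 α ∧ v = Delta1 d d1 p}

/-- `β^*(α) = inf {Δ₁(p) : Δ₀(p) < α}`. -/
noncomputable def betaStarHigh {Z : Type*} [Fintype Z]
    (d : (Z → ℝ) → ℝ) (d0 d1 : ℝ) (α : ENNReal) : ENNReal :=
  sInf {v | ∃ p ∈ simplex Z, Delta0 d d0 p < α ∧ v = Delta1 d d1 p}

/-- The `k`-th marginal of a joint distribution on `Fin K → X`. -/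
noncomputable def marg {X : Type*} [Fintype X] [DecidableEq X] {K : ℕ}
    (p : (Fin K → X) → ℝ) (k : Fin K) : X → ℝ :=
  fun x => ∑ f ∈ Finset.univ.filter (fun f : Fin K → X => f k = x), p f

open scoped Classical

/-- The empirical type (empirical distribution) of a length-`t` sequence. -/
noncomputable def empDist {Z : Type*} [Fintype Z] [DecidableEq Z] {t : ℕ}
    (s : Fin t → Z) : Z → ℝ :=
  fun z => ((Finset.univ.filter fun i => s i = z).card : ℝ) / t

/-- Probability of a set of length-`t` i.i.d. sequences under per-symbol distribution `p`. -/
noncomputable def seqProb {Z : Type*} [Fintype Z] {t : ℕ}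
    (p : Z → ℝ) (A : Finset (Fin t → Z)) : ENNReal :=
  ∑ s ∈ A, ∏ i, ENNReal.ofReal (p (s i))

set_option linter.unusedSectionVars false
section aux

variable {Z : Type*} [Fintype Z] [DecidableEq Z] {t : ℕ}

lemma prod_comp_cnt {M : Type*} [CommMonoid M] (s : Fin t → Z) (f : Z → M) :
    ∏ i, f (s i) = ∏ z, f z ^ (Finset.univ.filter fun i => s i = z).card := by
  rw [← Finset.prod_fiberwise_of_maps_to (g := s) (t := univ) (fun i _ => mem_univ _)]
  refine Finset.prod_congr rfl fun z _ => ?_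
  rw [Finset.prod_congr rfl (fun i hi => by rw [(Finset.mem_filter.1 hi).2] :
      ∀ i ∈ univ.filter fun i => s i = z, f (s i) = f z), Finset.prod_const]

lemma sum_cnt (s : Fin t → Z) :
    ∑ z, (Finset.univ.filter fun i => s i = z).card = t := by
  rw [← Finset.card_eq_sum_card_fiberwise (fun i (_ : i ∈ univ) => mem_univ (s i))]
  simp

lemma empDist_mem (ht : 0 < t) (s : Fin t → Z) : empDist s ∈ simplex Z := by
  constructor
  · intro z; exact div_nonneg (Nat.cast_nonneg _) (Nat.cast_nonneg _)
  · simp only [empDist]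
    rw [← Finset.sum_div]
    rw [show (∑ z, (((Finset.univ.filter fun i => s i = z).card : ℝ))) = ((t : ℝ)) by
      rw [← Nat.cast_sum]; exact_mod_cast sum_cnt s]
    exact div_self (Nat.cast_ne_zero.2 ht.ne')

/-- key identity -/
lemma prod_eq_mul_rpow (ht : 0 < t) (s : Fin t → Z) (p : Z → ℝ) (hp : ∀ z, 0 ≤ p z)
    (h : ∀ z, p z = 0 → empDist s z = 0) :
    ∏ i, p (s i) = (∏ i, empDist s (s i)) *
      (2:ℝ) ^ (-(t:ℝ) * ∑ z, empDist s z * Real.logb 2 (empDist s z / p z)) := by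
  have ht' : (t : ℝ) ≠ 0 := Nat.cast_ne_zero.2 ht.ne'
  set cnt : Z → ℕ := fun z => (Finset.univ.filter fun i => s i = z).card with hcnt
  have hq : ∀ z, empDist s z = (cnt z : ℝ) / t := fun z => rfl
  rw [prod_comp_cnt s p, prod_comp_cnt s (empDist s)]
  rw [neg_mul, Finset.mul_sum, ← Finset.sum_neg_distrib,
    Real.rpow_def_of_pos (by norm_num : (0:ℝ) < 2), mul_comm (Real.log 2), Finset.sum_mul,
    Real.exp_sum, ← Finset.prod_mul_distrib]
  refine Finset.prod_congr rfl fun z _ => ?_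
  rw [← mul_comm (Real.log 2), ← Real.rpow_def_of_pos (by norm_num : (0:ℝ) < 2)]
  have hcz : (Finset.univ.filter fun i => s i = z).card = cnt z := rfl
  rw [hcz]
  rcases Nat.eq_zero_or_pos (cnt z) with h0 | hpos
  · have : empDist s z = 0 := by rw [hq, h0]; simp
    rw [h0, this]; simp
  · have hqz : 0 < empDist s z := by
      rw [hq]; positivity
    have hpz : 0 < p z := by
      rcases (hp z).lt_or_eq with h' | h'
      · exact h'
      · exact absurd (h z h'.symm) hqz.ne'
    have htq : (t : ℝ) * empDist s z = (cnt z : ℝ) := by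
      rw [hq]; field_simp
    have : -((t:ℝ) * (empDist s z * Real.logb 2 (empDist s z / p z)))
        = Real.logb 2 (empDist s z / p z) * (-(cnt z : ℝ)) := by
      rw [← mul_assoc, htq]; ring
    rw [this, Real.rpow_mul (by norm_num : (0:ℝ) ≤ 2),
      Real.rpow_logb (by norm_num) (by norm_num) (div_pos hqz hpz),
      Real.rpow_neg (le_of_lt (div_pos hqz hpz)), Real.rpow_natCast, div_pow]
    field_simp

/-- single-sequence bound -/
lemma seq_bound (ht : 0 < t) (s : Fin t → Z) (p : Z → ℝ) (hp : ∀ z, 0 ≤ p z)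
    (c : ℝ) (hc : 0 < c) (hs : ENNReal.ofReal c ≤ KLdiv (empDist s) p) :
    ∏ i, ENNReal.ofReal (p (s i)) ≤
      (∏ i, ENNReal.ofReal (empDist s (s i))) * ENNReal.ofReal ((2:ℝ) ^ (-(t:ℝ) * c)) := by
  by_cases h : ∀ z, p z = 0 → empDist s z = 0
  · -- KL finite case
    have hD : c ≤ ∑ z, empDist s z * Real.logb 2 (empDist s z / p z) := by
      rw [KLdiv, if_pos h] at hs
      by_contra hlt
      push_neg at hlt
      exact absurd (lt_of_le_of_lt hs
        (ENNReal.ofReal_lt_ofReal_iff hc |>.2 hlt)) (lt_irrefl _)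
    have hqnn : ∀ i, 0 ≤ empDist s (s i) := fun i =>
      div_nonneg (Nat.cast_nonneg _) (Nat.cast_nonneg _)
    have key := prod_eq_mul_rpow ht s p hp h
    calc ∏ i, ENNReal.ofReal (p (s i))
        = ENNReal.ofReal (∏ i, p (s i)) := by
          rw [← ENNReal.ofReal_prod_of_nonneg (fun i _ => hp (s i))]
      _ ≤ ENNReal.ofReal ((∏ i, empDist s (s i)) * (2:ℝ) ^ (-(t:ℝ) * c)) := by
          rw [key]
          refine ENNReal.ofReal_le_ofReal ?_
          refine mul_le_mul_of_nonneg_left ?_ (Finset.prod_nonneg fun i _ => hqnn i)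
          exact Real.rpow_le_rpow_of_exponent_le (by norm_num)
            (by
              have htpos : (0:ℝ) < t := by exact_mod_cast ht
              nlinarith)
      _ = (∏ i, ENNReal.ofReal (empDist s (s i))) * ENNReal.ofReal ((2:ℝ) ^ (-(t:ℝ) * c)) := by
          rw [ENNReal.ofReal_mul (Finset.prod_nonneg fun i _ => hqnn i),
            ← ENNReal.ofReal_prod_of_nonneg (fun i _ => hqnn i)]
  · push_neg at h
    obtain ⟨z, hpz, hqz⟩ := h
    have : ∃ i, s i = z := by
      by_contra hno
      push_neg at hno
      apply hqz
      simp only [empDist]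
      rw [Finset.filter_false_of_mem (fun i _ => hno i)]
      simp
    obtain ⟨i, hi⟩ := this
    rw [Finset.prod_eq_zero (Finset.mem_univ i) (by rw [hi, hpz]; simp)]
    exact zero_le

/-- total mass is 1 -/
lemma seqProb_univ (p : Z → ℝ) (hp : p ∈ simplex Z) :
    seqProb p (Finset.univ : Finset (Fin t → Z)) = 1 := by
  rw [seqProb, ← Fintype.piFinset_univ, ← Finset.sum_pow' univ (fun z => ENNReal.ofReal (p z)) t,
    ← ENNReal.ofReal_sum_of_nonneg (fun z _ => hp.1 z), hp.2]
  simp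

/-- number of types bound packaged with main sum -/
lemma key_lemma (ht : 0 < t) (p : Z → ℝ) (hp : p ∈ simplex Z) (A : Finset (Fin t → Z))
    (c : ℝ) (hc : 0 ≤ c)
    (hA : ∀ s ∈ A, ENNReal.ofReal c ≤ KLdiv (empDist s) p) :
    seqProb p A ≤ ((t : ENNReal) + 1) ^ (Fintype.card Z) *
      ENNReal.ofReal ((2:ℝ) ^ (-(t:ℝ) * c)) := by
  rcases hc.lt_or_eq with hc | hc
  · -- main case c > 0
    set C := ENNReal.ofReal ((2:ℝ) ^ (-(t:ℝ) * c)) with hC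
    set N : (Fin t → Z) → (Z → ℕ) := fun s z => (Finset.univ.filter fun i => s i = z).card
      with hN
    have step1 : seqProb p A ≤ (∑ s ∈ A, ∏ i, ENNReal.ofReal (empDist s (s i))) * C := by
      rw [seqProb, Finset.sum_mul]
      exact Finset.sum_le_sum fun s hs => seq_bound ht s p hp.1 c hc (hA s hs)
    have step2 : (∑ s ∈ A, ∏ i, ENNReal.ofReal (empDist s (s i)))
        ≤ ((A.image N).card : ENNReal) := by
      rw [← Finset.sum_fiberwise_of_maps_to (g := N) (fun s hs => Finset.mem_image_of_mem N hs)
        (fun s => ∏ i, ENNReal.ofReal (empDist s (s i)))]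
      calc ∑ n ∈ A.image N, ∑ s ∈ A.filter (fun s => N s = n),
            ∏ i, ENNReal.ofReal (empDist s (s i))
          ≤ ∑ n ∈ A.image N, (1 : ENNReal) := by
            refine Finset.sum_le_sum fun n hn => ?_
            obtain ⟨s₀, hs₀A, hs₀⟩ := Finset.mem_image.1 hn
            calc ∑ s ∈ A.filter (fun s => N s = n), ∏ i, ENNReal.ofReal (empDist s (s i))
                = ∑ s ∈ A.filter (fun s => N s = n),
                    ∏ i, ENNReal.ofReal ((n (s i) : ℝ) / t) := by
                  refine Finset.sum_congr rfl fun s hs => ?_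
                  have : N s = n := (Finset.mem_filter.1 hs).2
                  refine Finset.prod_congr rfl fun i _ => ?_
                  rw [show empDist s (s i) = (N s (s i) : ℝ) / t from rfl, this]
              _ ≤ ∑ s : Fin t → Z, ∏ i, ENNReal.ofReal ((n (s i) : ℝ) / t) :=
                  Finset.sum_le_sum_of_subset (Finset.filter_subset _ _ |>.trans (Finset.subset_univ _))
              _ = (∑ z, ENNReal.ofReal ((n z : ℝ) / t)) ^ t := by
                  rw [Finset.sum_pow' univ (fun z => ENNReal.ofReal ((n z : ℝ) / t)) t,
                    Fintype.piFinset_univ]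
              _ = 1 := by
                  rw [← ENNReal.ofReal_sum_of_nonneg
                    (fun z _ => div_nonneg (Nat.cast_nonneg _) (Nat.cast_nonneg _)),
                    ← Finset.sum_div]
                  have : (∑ z, ((n z : ℝ))) = (t : ℝ) := by
                    rw [← Nat.cast_sum]
                    rw [← hs₀]
                    exact_mod_cast sum_cnt s₀
                  rw [this, div_self (Nat.cast_ne_zero.2 ht.ne')]
                  simp
        _ = ((A.image N).card : ENNReal) := by simp
    have step3 : ((A.image N).card : ENNReal) ≤ ((t : ENNReal) + 1) ^ (Fintype.card Z) := by
      have hcard : (A.image N).card ≤ (t + 1) ^ (Fintype.card Z) := by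
        have hinj : ∀ n ∈ A.image N, ∀ z, n z < t + 1 := by
          intro n hn z
          obtain ⟨s₀, _, hs₀⟩ := Finset.mem_image.1 hn
          rw [← hs₀]
          exact Nat.lt_succ_of_le (le_trans (Finset.card_filter_le _ _) (by simp))
        calc (A.image N).card
            ≤ (Finset.univ : Finset (Z → Fin (t+1))).card := by
              refine Finset.card_le_card_of_injOn
                (fun n => fun z => (⟨min (n z) t, Nat.lt_succ_of_le (min_le_right _ _)⟩ : Fin (t+1)))
                (fun n _ => Finset.mem_univ _) ?_
              intro a ha b hb hab
              funext z
              have ha' := Nat.lt_succ_iff.1 (hinj a ha z)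
              have hb' := Nat.lt_succ_iff.1 (hinj b hb z)
              have h2 := congrArg Fin.val (congrFun hab z)
              simpa [Nat.min_eq_left ha', Nat.min_eq_left hb'] using h2
          _ = (t + 1) ^ (Fintype.card Z) := by
              rw [Finset.card_univ, Fintype.card_fun]
              simp
      calc ((A.image N).card : ENNReal) ≤ (((t + 1) ^ (Fintype.card Z) : ℕ) : ENNReal) :=
            Nat.cast_le.2 hcard
        _ = ((t : ENNReal) + 1) ^ (Fintype.card Z) := by push_cast; ring
    calc seqProb p A ≤ (∑ s ∈ A, ∏ i, ENNReal.ofReal (empDist s (s i))) * C := step1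
      _ ≤ ((A.image N).card : ENNReal) * C := mul_le_mul_left step2 C
      _ ≤ ((t : ENNReal) + 1) ^ (Fintype.card Z) * C := mul_le_mul_left step3 C
  · -- c = 0
    subst hc
    calc seqProb p A ≤ seqProb p Finset.univ :=
          Finset.sum_le_sum_of_subset (Finset.subset_univ A)
      _ = 1 := seqProb_univ p hp
      _ ≤ ((t : ENNReal) + 1) ^ (Fintype.card Z) * ENNReal.ofReal ((2:ℝ) ^ (-(t:ℝ) * 0)) := by
          rw [mul_zero, Real.rpow_zero, ENNReal.ofReal_one, mul_one]
          exact one_le_pow_of_one_le' (by simp : (1:ENNReal) ≤ (t:ENNReal) + 1) _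

end aux

/-- Error-exponent bounds for the Hoeffding test which accepts `H₀` iff `Δ₀` of the
joint empirical type is `< α`.  The worst-case type-I error satisfies
`μ_t ≤ (t+1)^{|X|^K} · 2^{−tα}` and the worst-case type-II error satisfies
`λ_t ≤ (t+1)^{|X|^K} · 2^{−t β^*(α)}` (the latter expressed via every real lower
bound `b` on `β^*(α)`). -/
theorem stmt18 {X : Type*} [Fintype X] [DecidableEq X] (K t : ℕ) (ht : 0 < t)
    (d : ((Fin K → X) → ℝ) → ℝ) (d0 d1 : ℝ) (α : ℝ) (hα : 0 < α) :
    (⨆ p0 ∈ {p ∈ simplex (Fin K → X) | d p ≤ d0},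
        seqProb p0 (Finset.univ.filter fun s : Fin t → Fin K → X =>
          ¬ Delta0 d d0 (empDist s) < ENNReal.ofReal α))
      ≤ ((t : ENNReal) + 1) ^ (Fintype.card X ^ K) *
          ENNReal.ofReal ((2:ℝ) ^ (-(t : ℝ) * α)) ∧
    ∀ b : ℝ, 0 ≤ b →
      ENNReal.ofReal b ≤ betaStarHigh (Z := Fin K → X) d d0 d1 (ENNReal.ofReal α) →
      (⨆ p1 ∈ {p ∈ simplex (Fin K → X) | d1 ≤ d p},
          seqProb p1 (Finset.univ.filter fun s : Fin t → Fin K → X =>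
            Delta0 d d0 (empDist s) < ENNReal.ofReal α))
        ≤ ((t : ENNReal) + 1) ^ (Fintype.card X ^ K) *
            ENNReal.ofReal ((2:ℝ) ^ (-(t : ℝ) * b)) := by
  have hcard : Fintype.card (Fin K → X) = Fintype.card X ^ K := by
    rw [Fintype.card_fun, Fintype.card_fin]
  constructor
  · refine iSup₂_le fun p0 hp0 => ?_
    have h := key_lemma ht p0 hp0.1 (Finset.univ.filter fun s : Fin t → Fin K → X =>
        ¬ Delta0 d d0 (empDist s) < ENNReal.ofReal α) α hα.le (fun s hs => ?_)
    · rwa [hcard] at h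
    · have h1 : ¬ Delta0 d d0 (empDist s) < ENNReal.ofReal α := (Finset.mem_filter.1 hs).2
      refine le_trans (not_lt.1 h1) (sInf_le ?_)
      exact ⟨p0, hp0.1, hp0.2, rfl⟩
  · intro b hb hbβ
    refine iSup₂_le fun p1 hp1 => ?_
    have h := key_lemma ht p1 hp1.1 (Finset.univ.filter fun s : Fin t → Fin K → X =>
        Delta0 d d0 (empDist s) < ENNReal.ofReal α) b hb (fun s hs => ?_)
    · rwa [hcard] at h
    · have h1 : betaStarHigh d d0 d1 (ENNReal.ofReal α) ≤ Delta1 d d1 (empDist s) :=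
        sInf_le ⟨empDist s, empDist_mem ht s, (Finset.mem_filter.1 hs).2, rfl⟩
      have h2 : Delta1 d d1 (empDist s) ≤ KLdiv (empDist s) p1 :=
        sInf_le ⟨p1, hp1.1, hp1.2, rfl⟩
      exact le_trans hbβ (le_trans h1 h2)
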